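/- Let l0, l1, l2 be positive real numbers and 0 < a1 < a2. Define c1 = e^{(2+2i)a1/l1}, c2 = e^{(2+2i)a2/l1}, η1 = (l1-l0)(l1-l2), η2 = (l1+l0)(l1-l2), θ1 = (l1-l0)(l1+l2), θ2 = (l1+l0)(l1+l2). Then |c2 θ2 - c1 η1| > |c2 θ1 - c1 η2|, where |·| denotes the complex absolute value. -/

import Mathlib

open Complex

set_option maxHeartbeats 1000000 in
theorem two_jump_claim1 (l0 l1 l2 a1 a2 : ℝ)
    (hl0 : 0 < l0) (hl1 : 0 < l1) (hl2 : 0 < l2)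
    (ha1 : 0 < a1) (ha12 : a1 < a2) :
    ‖Complex.exp ((2 + 2 * Complex.I) * a2 / l1) * ((l1 + l0) * (l1 + l2))
        - Complex.exp ((2 + 2 * Complex.I) * a1 / l1) * ((l1 - l0) * (l1 - l2))‖
      > ‖Complex.exp ((2 + 2 * Complex.I) * a2 / l1) * ((l1 - l0) * (l1 + l2))
        - Complex.exp ((2 + 2 * Complex.I) * a1 / l1) * ((l1 + l0) * (l1 - l2))‖ := by
  have hl1' : (l1:ℝ) ≠ 0 := hl1.ne'
  set z2 := Complex.exp ((2 + 2 * Complex.I) * a2 / l1) with hz2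
  set z1 := Complex.exp ((2 + 2 * Complex.I) * a1 / l1) with hz1
  have hre2 : ((2 + 2 * Complex.I) * (a2:ℂ) / (l1:ℂ)).re = 2 * a2 / l1 := by
    simp [Complex.div_re, Complex.normSq_apply]
    field_simp
  have hre1 : ((2 + 2 * Complex.I) * (a1:ℂ) / (l1:ℂ)).re = 2 * a1 / l1 := by
    simp [Complex.div_re, Complex.normSq_apply]
    field_simp
  have hA2 : ‖z2‖ = Real.exp (2 * a2 / l1) := by
    rw [hz2, Complex.norm_exp, hre2]
  have hA1 : ‖z1‖ = Real.exp (2 * a1 / l1) := by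
    rw [hz1, Complex.norm_exp, hre1]
  have hN2 : z2.re ^ 2 + z2.im ^ 2 = Real.exp (2 * a2 / l1) ^ 2 := by
    rw [← hA2, Complex.sq_norm, Complex.normSq_apply]; ring
  have hN1 : z1.re ^ 2 + z1.im ^ 2 = Real.exp (2 * a1 / l1) ^ 2 := by
    rw [← hA1, Complex.sq_norm, Complex.normSq_apply]; ring
  have hE : Real.exp (2 * a1 / l1) < Real.exp (2 * a2 / l1) := by
    apply Real.exp_lt_exp.mpr
    gcongr
  have hE1 : (0:ℝ) < Real.exp (2 * a1 / l1) := Real.exp_pos _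
  have hE2 : (0:ℝ) < Real.exp (2 * a2 / l1) := Real.exp_pos _
  have hEsq : Real.exp (2 * a1 / l1) ^ 2 < Real.exp (2 * a2 / l1) ^ 2 := by nlinarith
  have h1 : (l1 - l2) ^ 2 < (l1 + l2) ^ 2 := by nlinarith [mul_pos hl1 hl2]
  have key : Real.exp (2 * a1 / l1) ^ 2 * (l1 - l2) ^ 2
      < Real.exp (2 * a2 / l1) ^ 2 * (l1 + l2) ^ 2 :=
    calc Real.exp (2 * a1 / l1) ^ 2 * (l1 - l2) ^ 2
        < Real.exp (2 * a1 / l1) ^ 2 * (l1 + l2) ^ 2 :=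
          mul_lt_mul_of_pos_left h1 (by positivity)
      _ < Real.exp (2 * a2 / l1) ^ 2 * (l1 + l2) ^ 2 :=
          mul_lt_mul_of_pos_right hEsq (by positivity)
  apply lt_of_pow_lt_pow_left₀ 2 (norm_nonneg _)
  rw [Complex.sq_norm, Complex.sq_norm,
    show ((l1:ℂ) + l0) * ((l1:ℂ) + l2) = (((l1 + l0) * (l1 + l2) : ℝ) : ℂ) by push_cast; ring,
    show ((l1:ℂ) - l0) * ((l1:ℂ) - l2) = (((l1 - l0) * (l1 - l2) : ℝ) : ℂ) by push_cast; ring,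
    show ((l1:ℂ) - l0) * ((l1:ℂ) + l2) = (((l1 - l0) * (l1 + l2) : ℝ) : ℂ) by push_cast; ring,
    show ((l1:ℂ) + l0) * ((l1:ℂ) - l2) = (((l1 + l0) * (l1 - l2) : ℝ) : ℂ) by push_cast; ring]
  have expand : ∀ (A B : ℝ), Complex.normSq (z2 * (A:ℂ) - z1 * (B:ℂ))
      = (z2.re * A - z1.re * B) ^ 2 + (z2.im * A - z1.im * B) ^ 2 := by
    intro A B
    simp [Complex.normSq_apply]
    ring
  rw [expand, expand]
  have main :
      ((z2.re * ((l1 + l0) * (l1 + l2)) - z1.re * ((l1 - l0) * (l1 - l2))) ^ 2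
        + (z2.im * ((l1 + l0) * (l1 + l2)) - z1.im * ((l1 - l0) * (l1 - l2))) ^ 2)
      - ((z2.re * ((l1 - l0) * (l1 + l2)) - z1.re * ((l1 + l0) * (l1 - l2))) ^ 2
        + (z2.im * ((l1 - l0) * (l1 + l2)) - z1.im * ((l1 + l0) * (l1 - l2))) ^ 2)
      = 4 * l0 * l1 * ((z2.re ^ 2 + z2.im ^ 2) * (l1 + l2) ^ 2
        - (z1.re ^ 2 + z1.im ^ 2) * (l1 - l2) ^ 2) := by ring
  rw [hN2, hN1] at main
  nlinarith [mul_pos (mul_pos hl0 hl1) (sub_pos.mpr key), main]
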